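/- Let r ≥ 2 and let θ₁,…,θₙ be a cyclically admissible sequence of elementary Nielsen automorphisms of F_r, with θ_i = [x_i ↦ y_i x_i]. Let D := Dθₙ ∘ ⋯ ∘ Dθ₁ : A^{±1} → A^{±1}. Then for every k ≥ 1, the k-fold composition D^k has image of size exactly 2r − 1; equivalently, the map D identifies exactly the pair {x₁, y₁} and permutes the remaining structure so that no further collapsing occurs under iteration. -/

import Mathlib

open scoped Classical

abbrev Letter (r : ℕ) := Fin r × Bool

def linv {r : ℕ} (a : Letter r) : Letter r := (a.1, !a.2)

/-- An elementary Nielsen automorphism `[x ↦ yx]` is parametrized by the pair `(x, y)`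
with `y ≠ x` and `y ≠ x⁻¹`. -/
def Nielsen {r : ℕ} (p : Letter r × Letter r) : Prop := p.2 ≠ p.1 ∧ p.2 ≠ linv p.1

/-- Admissibility of the ordered pair `([x ↦ yx], [x′ ↦ y′x′])`. -/
def Adm {r : ℕ} (p q : Letter r × Letter r) : Prop :=
  (q.1 = p.1 ∧ q.2 ≠ linv p.2) ∨ (q.2 = p.1 ∧ q.1 ≠ linv p.2)

/-- The derivative map of `[x ↦ yx]`: sends `x ↦ y` and fixes every other letter. -/
def Dmap {r : ℕ} (p : Letter r × Letter r) (a : Letter r) : Letter r :=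
  if a = p.1 then p.2 else a

/-- The composition `Dθₙ ∘ ⋯ ∘ Dθ₁` of derivative maps (applying `θ 0` first). -/
def DcompN (r n : ℕ) (θ : ℕ → Letter r × Letter r) (a : Letter r) : Letter r :=
  (List.range n).foldl (fun b i => Dmap (θ i) b) a

/-- Letter-by-letter substitution for `[x ↦ yx]`: replaces `x` by `yx`, `x⁻¹` by `x⁻¹y⁻¹`. -/
def subst (r : ℕ) (p : Letter r × Letter r) (w : List (Letter r)) : List (Letter r) :=
  w.flatMap (fun a =>
    if a = p.1 then [p.2, p.1]
    else if a = linv p.1 then [linv p.1, linv p.2]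
    else [a])

/-- Apply the substitutions `θ 0, θ 1, …, θ (n-1)` in order, letter by letter. -/
def iterSubst (r n : ℕ) (θ : ℕ → Letter r × Letter r) (w : List (Letter r)) : List (Letter r) :=
  (List.range n).foldl (fun w i => subst r (θ i) w) w


lemma dcompN_succ (r : ℕ) (θ : ℕ → Letter r × Letter r) (i : ℕ) (a : Letter r) :
    DcompN r (i+1) θ a = Dmap (θ i) (DcompN r i θ a) := by
  simp [DcompN, List.range_succ]

lemma dmap_ne {r : ℕ} (p : Letter r × Letter r) (hp : p.2 ≠ p.1) (b : Letter r) :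
    Dmap p b ≠ p.1 := by
  unfold Dmap; split_ifs with h <;> simp_all

lemma dmap_collision {r : ℕ} (p : Letter r × Letter r) {u v : Letter r}
    (h : Dmap p u = Dmap p v) : u = v ∨ (u = p.1 ∧ v = p.2) ∨ (u = p.2 ∧ v = p.1) := by
  unfold Dmap at h; split_ifs at h <;> aesop

lemma key (r n : ℕ) (θ : ℕ → Letter r × Letter r)
    (hN : ∀ i < n, Nielsen (θ i))
    (hadm : ∀ i, i + 1 < n → Adm (θ i) (θ (i + 1))) :
    ∀ i, 1 ≤ i → i ≤ n →
      (DcompN r i θ (θ 0).1 = DcompN r i θ (θ 0).2) ∧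
      (∀ a, DcompN r i θ a ≠ (θ (i-1)).1) ∧
      (∀ a b, DcompN r i θ a = DcompN r i θ b →
        a = b ∨ (a = (θ 0).1 ∧ b = (θ 0).2) ∨ (a = (θ 0).2 ∧ b = (θ 0).1)) := by
  intro i
  induction i with
  | zero => omega
  | succ i ih =>
    intro _ hle
    by_cases hi : i = 0
    · subst hi
      have hN0 := hN 0 (by omega)
      have hnat : (0 + 1 : ℕ) - 1 = 0 := rfl
      have hD0 : ∀ a, DcompN r 0 θ a = a := fun a => rfl
      refine ⟨?_, ?_, ?_⟩
      · rw [dcompN_succ, dcompN_succ, hD0, hD0]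
        unfold Dmap
        rw [if_pos rfl, if_neg hN0.1]
      · intro a
        rw [dcompN_succ, hD0, hnat]
        exact dmap_ne _ hN0.1 a
      · intro a b hab
        rw [dcompN_succ, dcompN_succ, hD0, hD0] at hab
        exact dmap_collision _ hab
    · have h1 : 1 ≤ i := Nat.one_le_iff_ne_zero.mpr hi
      obtain ⟨H1, H3, H2⟩ := ih h1 (by omega)
      have hNi := hN i (by omega)
      have hadm' : Adm (θ (i-1)) (θ i) := by
        have := hadm (i-1) (by omega)
        rwa [Nat.sub_add_cancel h1] at this
      have hnat : (i + 1 : ℕ) - 1 = i := rfl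
      refine ⟨?_, ?_, ?_⟩
      · rw [dcompN_succ, dcompN_succ, H1]
      · intro a
        rw [dcompN_succ, hnat]
        exact dmap_ne _ hNi.1 _
      · intro a b hab
        rw [dcompN_succ, dcompN_succ] at hab
        rcases dmap_collision _ hab with h | ⟨h1', h2'⟩ | ⟨h1', h2'⟩
        · exact H2 a b h
        · exfalso
          rcases hadm' with ⟨hx, _⟩ | ⟨hy, _⟩
          · exact H3 a (h1'.trans hx)
          · exact H3 b (h2'.trans hy)
        · exfalso
          rcases hadm' with ⟨hx, _⟩ | ⟨hy, _⟩
          · exact H3 b (h2'.trans hx)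
          · exact H3 a (h1'.trans hy)

/-- For a cyclically admissible sequence θ₁,…,θₙ, every power of the composed derivative map
D = Dθₙ ∘ ⋯ ∘ Dθ₁ has image of size exactly 2r − 1; moreover D identifies the pair {x₁, y₁}. -/
theorem stmt12 (r n : ℕ) (hr : 2 ≤ r) (hn : 1 ≤ n) (θ : ℕ → Letter r × Letter r)
    (hN : ∀ i < n, Nielsen (θ i))
    (hadm : ∀ i, i + 1 < n → Adm (θ i) (θ (i + 1)))
    (hcyc : Adm (θ (n - 1)) (θ 0)) :
    (∀ k : ℕ, 1 ≤ k →
      (Finset.univ.image ((DcompN r n θ)^[k])).card = 2 * r - 1) ∧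
    DcompN r n θ (θ 0).1 = DcompN r n θ (θ 0).2 := by
  obtain ⟨H1, H3, H2⟩ := key r n θ hN hadm n hn le_rfl
  set D := DcompN r n θ with hD
  have hN0 := hN 0 (by omega)
  have hxy : (θ 0).2 ≠ (θ 0).1 := hN0.1
  have hcyc' : (θ 0).1 = (θ (n-1)).1 ∨ (θ 0).2 = (θ (n-1)).1 := by
    rcases hcyc with ⟨h, _⟩ | ⟨h, _⟩
    · exact Or.inl h
    · exact Or.inr h
  have hinj : ∀ a b : Letter r, a ≠ (θ (n-1)).1 → b ≠ (θ (n-1)).1 → D a = D b → a = b := by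
    intro a b ha hb hab
    rcases H2 a b hab with h | ⟨h1', h2'⟩ | ⟨h1', h2'⟩
    · exact h
    · exfalso
      rcases hcyc' with h | h
      · exact ha (h1'.trans h)
      · exact hb (h2'.trans h)
    · exfalso
      rcases hcyc' with h | h
      · exact hb (h2'.trans h)
      · exact ha (h1'.trans h)
  have hcard_univ : (Finset.univ : Finset (Letter r)).card = 2 * r := by
    simp [Finset.card_univ]
    ring
  have base : (Finset.univ.image D).card = 2 * r - 1 := by
    have himg : Finset.univ.image D = (Finset.univ.erase (θ 0).1).image D := by
      apply Finset.Subset.antisymm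
      · intro b hb
        simp only [Finset.mem_image] at hb ⊢
        obtain ⟨a, _, rfl⟩ := hb
        by_cases ha : a = (θ 0).1
        · exact ⟨(θ 0).2, Finset.mem_erase.mpr ⟨hxy, Finset.mem_univ _⟩, by rw [ha, H1]⟩
        · exact ⟨a, Finset.mem_erase.mpr ⟨ha, Finset.mem_univ _⟩, rfl⟩
      · exact Finset.image_subset_image (Finset.erase_subset _ _)
    rw [himg, Finset.card_image_of_injOn, Finset.card_erase_of_mem (Finset.mem_univ _),
      hcard_univ]
    intro a ha b hb hab
    have ha' : a ≠ (θ 0).1 := (Finset.mem_erase.mp ha).1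
    have hb' : b ≠ (θ 0).1 := (Finset.mem_erase.mp hb).1
    rcases H2 a b hab with h | ⟨h1', _⟩ | ⟨_, h2'⟩
    · exact h
    · exact absurd h1' ha'
    · exact absurd h2' hb'
  have havoid : ∀ k, 1 ≤ k → ∀ b ∈ Finset.univ.image (D^[k]), b ≠ (θ (n-1)).1 := by
    intro k hk b hb
    simp only [Finset.mem_image] at hb
    obtain ⟨a, _, rfl⟩ := hb
    obtain ⟨k', rfl⟩ := Nat.exists_eq_add_of_le hk
    rw [add_comm, Function.iterate_succ_apply']
    exact H3 _
  constructor
  · intro k hk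
    induction k with
    | zero => omega
    | succ k ihk =>
      by_cases hk0 : k = 0
      · subst hk0
        simpa using base
      · have hk1 : 1 ≤ k := Nat.one_le_iff_ne_zero.mpr hk0
        have himg : Finset.univ.image (D^[k+1]) = (Finset.univ.image (D^[k])).image D := by
          rw [Finset.image_image, ← Function.iterate_succ']
        rw [himg, Finset.card_image_of_injOn, ihk hk1]
        intro a ha b hb hab
        exact hinj a b (havoid k hk1 a ha) (havoid k hk1 b hb) hab
  · exact H1
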